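/- Let A be a symmetric positive definite n×n real matrix and B an m×n real matrix of full row rank. Suppose there are constants 0 < cI and 0 < cb, and symmetric positive definite matrices representing norms: for all v ∈ ℝⁿ and q ∈ ℝᵐ, cI·(qᵀMq)^{1/2} ≤ sup_{v≠0} (qᵀBv)/(vᵀAv)^{1/2} and |qᵀBv| ≤ cb·(vᵀAv)^{1/2}·(qᵀMq)^{1/2}, where M is symmetric positive definite. Then the Schur complement S = B A⁻¹ Bᵀ satisfies cI² ≤ (qᵀSq)/(qᵀMq) ≤ cb² for all nonzero q ∈ ℝᵐ. -/

import Mathlib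

open Matrix

/-- Cauchy–Schwarz for the bilinear form of a positive definite real matrix. -/
lemma posDef_cauchy_schwarz {n : ℕ} {A : Matrix (Fin n) (Fin n) ℝ} (hA : A.PosDef)
    (u v : Fin n → ℝ) :
    (u ⬝ᵥ A.mulVec v) ^ 2 ≤ (u ⬝ᵥ A.mulVec u) * (v ⬝ᵥ A.mulVec v) := by
  have hsym : ∀ x y : Fin n → ℝ, x ⬝ᵥ A.mulVec y = y ⬝ᵥ A.mulVec x := by
    intro x y
    rw [dotProduct_mulVec, ← mulVec_transpose, ← conjTranspose_eq_transpose_of_trivial,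
      hA.1.eq, dotProduct_comm]
  have key : ∀ t : ℝ, 0 ≤ (v ⬝ᵥ A.mulVec v) * (t * t)
      + (2 * (u ⬝ᵥ A.mulVec v)) * t + (u ⬝ᵥ A.mulVec u) := by
    intro t
    have h0 : 0 ≤ (u + t • v) ⬝ᵥ A.mulVec (u + t • v) := by
      by_cases h : u + t • v = 0
      · simp [h]
      · exact le_of_lt (by simpa using hA.dotProduct_mulVec_pos h)
    have expand : (u + t • v) ⬝ᵥ A.mulVec (u + t • v)
        = (v ⬝ᵥ A.mulVec v) * (t * t) + (2 * (u ⬝ᵥ A.mulVec v)) * t + (u ⬝ᵥ A.mulVec u) := by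
      rw [mulVec_add, mulVec_smul, dotProduct_add, add_dotProduct, add_dotProduct,
        dotProduct_smul, smul_dotProduct, dotProduct_smul, hsym v u]
      simp only [smul_dotProduct, dotProduct_smul, smul_eq_mul]
      ring
    linarith [expand ▸ h0]
  have := discrim_le_zero key
  rw [discrim] at this
  nlinarith [this]

/-- Spectral equivalence of the Schur complement `S = B A⁻¹ Bᵀ` with the norm
matrix `M`, given an inf-sup condition and a boundedness bound. -/
theorem schur_spectral_equivalence
    {n m : ℕ}
    (A : Matrix (Fin n) (Fin n) ℝ) (hA : A.PosDef)
    (B : Matrix (Fin m) (Fin n) ℝ) (hB : B.rank = m)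
    (M : Matrix (Fin m) (Fin m) ℝ) (hM : M.PosDef)
    (cI cb : ℝ) (hcI : 0 < cI) (hcb : 0 < cb)
    (hinf : ∀ q : Fin m → ℝ,
      cI * Real.sqrt (q ⬝ᵥ M.mulVec q) ≤
        ⨆ v : {v : Fin n → ℝ // v ≠ 0},
          (q ⬝ᵥ B.mulVec v.1) / Real.sqrt (v.1 ⬝ᵥ A.mulVec v.1))
    (hbd : ∀ (v : Fin n → ℝ) (q : Fin m → ℝ),
      |q ⬝ᵥ B.mulVec v| ≤
        cb * Real.sqrt (v ⬝ᵥ A.mulVec v) * Real.sqrt (q ⬝ᵥ M.mulVec q)) :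
    ∀ q : Fin m → ℝ, q ≠ 0 →
      cI ^ 2 ≤ (q ⬝ᵥ (B * A⁻¹ * Bᵀ).mulVec q) / (q ⬝ᵥ M.mulVec q) ∧
      (q ⬝ᵥ (B * A⁻¹ * Bᵀ).mulVec q) / (q ⬝ᵥ M.mulVec q) ≤ cb ^ 2 := by
  intro q hq
  have hMq : 0 < q ⬝ᵥ M.mulVec q := by simpa using hM.dotProduct_mulVec_pos hq
  set t : ℝ := Real.sqrt (q ⬝ᵥ M.mulVec q) with ht
  have htpos : 0 < t := Real.sqrt_pos.2 hMq
  have ht2 : t ^ 2 = q ⬝ᵥ M.mulVec q := Real.sq_sqrt hMq.le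
  set w : Fin n → ℝ := Bᵀ.mulVec q with hw
  set u : Fin n → ℝ := A⁻¹.mulVec w with hu
  have hAinv : A * A⁻¹ = 1 :=
    A.mul_nonsing_inv (isUnit_iff_ne_zero.2 hA.det_pos.ne')
  have hAu : A.mulVec u = w := by
    rw [hu, mulVec_mulVec, hAinv, one_mulVec]
  set s : ℝ := q ⬝ᵥ (B * A⁻¹ * Bᵀ).mulVec q with hs
  have hqB : ∀ x : Fin n → ℝ, q ⬝ᵥ B.mulVec x = w ⬝ᵥ x := by
    intro x
    rw [dotProduct_mulVec, hw, mulVec_transpose]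
  have hsu : s = q ⬝ᵥ B.mulVec u := by
    rw [hs, hu, hw, ← mulVec_mulVec, ← mulVec_mulVec]
  have hswu : s = w ⬝ᵥ u := by rw [hsu, hqB]
  have hsAu : s = u ⬝ᵥ A.mulVec u := by
    rw [hAu, hswu, dotProduct_comm]
  have hs0 : 0 ≤ s := by
    rw [hsAu]
    by_cases h : u = 0
    · simp [h]
    · have h2 : 0 < u ⬝ᵥ A.mulVec u := by simpa using hA.dotProduct_mulVec_pos h
      exact h2.le
  -- upper bound
  have hub : s ≤ cb ^ 2 * (q ⬝ᵥ M.mulVec q) := by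
    have h1 : s ≤ cb * Real.sqrt s * t := by
      calc s = q ⬝ᵥ B.mulVec u := hsu
        _ ≤ |q ⬝ᵥ B.mulVec u| := le_abs_self _
        _ ≤ cb * Real.sqrt (u ⬝ᵥ A.mulVec u) * t := hbd u q
        _ = cb * Real.sqrt s * t := by rw [← hsAu]
    have hss : s = Real.sqrt s * Real.sqrt s := (Real.mul_self_sqrt hs0).symm
    by_cases hsz : Real.sqrt s = 0
    · rw [hss, hsz, zero_mul]; positivity
    · have hsp : 0 < Real.sqrt s := lt_of_le_of_ne (Real.sqrt_nonneg s) (Ne.symm hsz)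
      have h2 : Real.sqrt s ≤ cb * t := by
        nlinarith [h1, hss, hsp]
      calc s = Real.sqrt s * Real.sqrt s := hss
        _ ≤ (cb * t) * (cb * t) :=
            mul_le_mul h2 h2 hsp.le (by positivity)
        _ = cb ^ 2 * (q ⬝ᵥ M.mulVec q) := by rw [← ht2]; ring
  -- lower bound
  have hlb : cI ^ 2 * (q ⬝ᵥ M.mulVec q) ≤ s := by
    have hsup_le : (⨆ v : {v : Fin n → ℝ // v ≠ 0},
        (q ⬝ᵥ B.mulVec v.1) / Real.sqrt (v.1 ⬝ᵥ A.mulVec v.1)) ≤ Real.sqrt s := by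
      by_cases hne : Nonempty {v : Fin n → ℝ // v ≠ 0}
      · apply ciSup_le
        intro ⟨v, hv⟩
        have hvA : 0 < v ⬝ᵥ A.mulVec v := by simpa using hA.dotProduct_mulVec_pos hv
        have hvs : 0 < Real.sqrt (v ⬝ᵥ A.mulVec v) := Real.sqrt_pos.2 hvA
        rw [div_le_iff₀ hvs]
        have h3 : q ⬝ᵥ B.mulVec v = u ⬝ᵥ A.mulVec v := by
          rw [hqB, ← hAu, dotProduct_mulVec, ← mulVec_transpose,
            ← conjTranspose_eq_transpose_of_trivial, hA.1.eq, dotProduct_comm,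
            dotProduct_mulVec, ← mulVec_transpose, ← conjTranspose_eq_transpose_of_trivial,
            hA.1.eq]
        rw [h3]
        have hcs := posDef_cauchy_schwarz hA u v
        rw [← hsAu] at hcs
        exact (abs_le_of_sq_le_sq' (by
          calc (u ⬝ᵥ A.mulVec v) ^ 2 ≤ s * (v ⬝ᵥ A.mulVec v) := hcs
            _ = (Real.sqrt s * Real.sqrt (v ⬝ᵥ A.mulVec v)) ^ 2 := by
                rw [mul_pow, Real.sq_sqrt hs0, Real.sq_sqrt hvA.le]) (by positivity)).2
      · rw [not_nonempty_iff] at hne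
        rw [Real.iSup_of_isEmpty]
        exact Real.sqrt_nonneg s
    have h4 : cI * t ≤ Real.sqrt s := le_trans (hinf q) hsup_le
    have h5 : (cI * t) ^ 2 ≤ s := by
      rw [← Real.sq_sqrt hs0]
      exact pow_le_pow_left₀ (by positivity) h4 2
    calc cI ^ 2 * (q ⬝ᵥ M.mulVec q) = (cI * t) ^ 2 := by rw [← ht2]; ring
      _ ≤ s := h5
  constructor
  · rw [le_div_iff₀ hMq]; exact hlb
  · rw [div_le_iff₀ hMq]; exact hub
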